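/- Let (T, η, μ) be a monad on the category of sets and (A, e : TA → A) a T-algebra. The partial evaluation relation on TA, i.e. the set {(μ_A(τ), (Te)(τ)) : τ ∈ TTA} ⊆ TA × TA, is an internal relation on the free algebra (TA, μ_A), and moreover it is the smallest internal relation on TA containing the set {(t, η_A(e(t))) : t ∈ TA} which relates every formal expression to its total evaluation. -/

import Mathlib

open CategoryTheory

universe u

/-- The partial evaluation relation `{(μ τ, (Te) τ) : τ ∈ TTA} ⊆ TA × TA` is an
internal relation on the free algebra `(TA, μ)`, and it is the smallest internal
relation relating every formal expression `t` to its total evaluation `η (e t)`. -/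
theorem partial_evaluation_relation_internal_smallest
    (T : CategoryTheory.Monad (Type u)) (A : T.Algebra) :
    (∀ ρ : T.obj {x : T.obj A.A × T.obj A.A //
        x ∈ Set.range fun τ : T.obj (T.obj A.A) => (T.μ.app A.A τ, T.map A.a τ)},
      (T.μ.app A.A (T.map (TypeCat.ofHom (Prod.fst : T.obj A.A × T.obj A.A → T.obj A.A))
          (T.map (TypeCat.ofHom Subtype.val) ρ)),
       T.μ.app A.A (T.map (TypeCat.ofHom (Prod.snd : T.obj A.A × T.obj A.A → T.obj A.A))
          (T.map (TypeCat.ofHom Subtype.val) ρ)))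
        ∈ Set.range fun τ : T.obj (T.obj A.A) => (T.μ.app A.A τ, T.map A.a τ))
    ∧
    (∀ t : T.obj A.A,
      (t, T.η.app A.A (A.a t))
        ∈ Set.range fun τ : T.obj (T.obj A.A) => (T.μ.app A.A τ, T.map A.a τ))
    ∧
    ∀ R : Set (T.obj A.A × T.obj A.A),
      (∀ ρ : T.obj {x : T.obj A.A × T.obj A.A // x ∈ R},
        (T.μ.app A.A (T.map (TypeCat.ofHom (Prod.fst : T.obj A.A × T.obj A.A → T.obj A.A))
            (T.map (TypeCat.ofHom Subtype.val) ρ)),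
         T.μ.app A.A (T.map (TypeCat.ofHom (Prod.snd : T.obj A.A × T.obj A.A → T.obj A.A))
            (T.map (TypeCat.ofHom Subtype.val) ρ))) ∈ R) →
      (∀ t : T.obj A.A, (t, T.η.app A.A (A.a t)) ∈ R) →
      (Set.range fun τ : T.obj (T.obj A.A) => (T.μ.app A.A τ, T.map A.a τ)) ⊆ R := by
  have mapc : ∀ {X Y Z : Type u} (f : X → Y) (g : Y → Z) (x : T.obj X),
      T.map (TypeCat.ofHom g) (T.map (TypeCat.ofHom f) x) = T.map (TypeCat.ofHom (g ∘ f)) x := by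
    intro X Y Z f g x
    exact (ConcreteCategory.congr_hom (T.map_comp (TypeCat.ofHom f) (TypeCat.ofHom g)) x).symm
  refine ⟨?_, ?_, ?_⟩
  · intro ρ
    let s : {x : T.obj A.A × T.obj A.A //
        x ∈ Set.range fun τ : T.obj (T.obj A.A) => (T.μ.app A.A τ, T.map A.a τ)} →
        T.obj (T.obj A.A) := fun x => x.2.choose
    have hs : ∀ x, (T.μ.app A.A (s x), T.map A.a (s x)) = x.val := fun x => x.2.choose_spec
    refine ⟨T.μ.app (T.obj A.A) (T.map (TypeCat.ofHom s) ρ), ?_⟩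
    have e1 : ((T.μ.app A.A : T.obj (T.obj A.A) → T.obj A.A) ∘ s) = (Prod.fst ∘ Subtype.val) := by
      funext x; exact congrArg Prod.fst (hs x)
    have e2 : ((T.map A.a : T.obj (T.obj A.A) → T.obj A.A) ∘ s) = (Prod.snd ∘ Subtype.val) := by
      funext x; exact congrArg Prod.snd (hs x)
    refine Prod.ext ?_ ?_
    · calc T.μ.app A.A (T.μ.app (T.obj A.A) (T.map (TypeCat.ofHom s) ρ))
          = T.μ.app A.A (T.map (TypeCat.ofHom (T.μ.app A.A : T.obj (T.obj A.A) → T.obj A.A)) (T.map (TypeCat.ofHom s) ρ)) :=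
            (ConcreteCategory.congr_hom (T.assoc A.A) (T.map (TypeCat.ofHom s) ρ)).symm
        _ = T.μ.app A.A (T.map (TypeCat.ofHom ((T.μ.app A.A : T.obj (T.obj A.A) → T.obj A.A) ∘ s)) ρ) := by rw [mapc]
        _ = T.μ.app A.A (T.map (TypeCat.ofHom (Prod.fst ∘ Subtype.val)) ρ) := by rw [e1]
        _ = _ := by rw [← mapc]
    · calc T.map A.a (T.μ.app (T.obj A.A) (T.map (TypeCat.ofHom s) ρ))
          = T.μ.app A.A (T.map (TypeCat.ofHom (T.map A.a : T.obj (T.obj A.A) → T.obj A.A)) (T.map (TypeCat.ofHom s) ρ)) :=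
            (ConcreteCategory.congr_hom (T.μ.naturality A.a) (T.map (TypeCat.ofHom s) ρ)).symm
        _ = T.μ.app A.A (T.map (TypeCat.ofHom ((T.map A.a : T.obj (T.obj A.A) → T.obj A.A) ∘ s)) ρ) := by rw [mapc]
        _ = T.μ.app A.A (T.map (TypeCat.ofHom (Prod.snd ∘ Subtype.val)) ρ) := by rw [e2]
        _ = _ := by rw [← mapc]
  · intro t
    refine ⟨T.η.app (T.obj A.A) t, Prod.ext ?_ ?_⟩
    · exact ConcreteCategory.congr_hom (T.left_unit A.A) t
    · exact (ConcreteCategory.congr_hom (T.η.naturality A.a) t).symm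
  · intro R hclosed hη τ hτ
    obtain ⟨τ, rfl⟩ := hτ
    let g : T.obj A.A → {x : T.obj A.A × T.obj A.A // x ∈ R} :=
      fun t => ⟨(t, T.η.app A.A (A.a t)), hη t⟩
    have key := hclosed (T.map (TypeCat.ofHom g) τ)
    have e1 : T.map (TypeCat.ofHom (Prod.fst : T.obj A.A × T.obj A.A → T.obj A.A))
        (T.map (TypeCat.ofHom Subtype.val) (T.map (TypeCat.ofHom g) τ)) = τ := by
      rw [mapc, mapc]
      have hc : ((Prod.fst : T.obj A.A × T.obj A.A → T.obj A.A) ∘ Subtype.val) ∘ g = id := rfl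
      rw [hc]
      exact ConcreteCategory.congr_hom (T.map_id (T.obj A.A)) τ
    have e2 : T.μ.app A.A (T.map (TypeCat.ofHom (Prod.snd : T.obj A.A × T.obj A.A → T.obj A.A))
        (T.map (TypeCat.ofHom Subtype.val) (T.map (TypeCat.ofHom g) τ))) = T.map A.a τ := by
      rw [mapc, mapc]
      have hc : ((Prod.snd : T.obj A.A × T.obj A.A → T.obj A.A) ∘ Subtype.val) ∘ g
          = ((T.η.app A.A : A.A → T.obj A.A) ∘ (A.a : T.obj A.A → A.A)) := rfl
      rw [hc, ← mapc]
      exact ConcreteCategory.congr_hom (T.right_unit A.A) (T.map A.a τ)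
    rw [e1, e2] at key
    exact key
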